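/- Let K be a field, G a group, and A = ⊕_{g∈G} A_g a G-graded K-algebra with A_g A_h = A_{gh} for all g,h ∈ G (i.e., A is strongly graded). Let B = A_e. Then the Galois map β : A ⊗_B A → A ⊗_K K[G], defined on homogeneous elements by β(a ⊗ a') = Σ a·a'_g ⊗ g for a' = Σ a'_g, is surjective. -/

import Mathlib

open TensorProduct

/-- Let `K` be a field, `G` a group and `A = ⊕_{g ∈ G} A_g` a
strongly `G`-graded `K`-algebra (`A_g A_h = A_{gh}` for all `g, h`), with identity
component `B = A_e`.  Then the Galois map `β : A ⊗_B A → A ⊗_K K[G]`,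
`β(a ⊗ a') = Σ_g a·a'_g ⊗ g`, is surjective.  (Since `A ⊗_B A` is a quotient of
`A ⊗_K A`, this is equivalent to the surjectivity of the induced map on `A ⊗_K A`,
which is how the map is formalized here.) -/
theorem strongly_graded_galois_map_surjective
    (K G A : Type*) [Field K] [Group G] [DecidableEq G] [Ring A] [Algebra K A]
    (𝒜 : G → Submodule K A)
    (hdecomp : DirectSum.IsInternal 𝒜)
    (hone : (1 : A) ∈ 𝒜 1)
    (hstrong : ∀ g h : G, 𝒜 g * 𝒜 h = 𝒜 (g * h))
    (β : A ⊗[K] A →ₗ[K] A ⊗[K] MonoidAlgebra K G)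
    (hβ : ∀ (a a' : A) (g : G), a' ∈ 𝒜 g →
      β (a ⊗ₜ a') = (a * a') ⊗ₜ MonoidAlgebra.single g (1 : K)) :
    Function.Surjective β := by
  have key : ∀ (a : A) (g : G),
      a ⊗ₜ[K] MonoidAlgebra.single g (1 : K) ∈ LinearMap.range β := by
    intro a g
    have h1 : (1 : A) ∈ 𝒜 g⁻¹ * 𝒜 g := by
      rw [hstrong, inv_mul_cancel]; exact hone
    have main : ∀ r ∈ 𝒜 g⁻¹ * 𝒜 g,
        (a * r) ⊗ₜ[K] MonoidAlgebra.single g (1 : K) ∈ LinearMap.range β := by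
      intro r hr
      refine Submodule.mul_induction_on hr ?_ ?_
      · intro v hv u hu
        exact ⟨(a * v) ⊗ₜ u, by rw [hβ _ _ g hu, mul_assoc]⟩
      · intro x y hx hy
        rw [mul_add, TensorProduct.add_tmul]
        exact Submodule.add_mem _ hx hy
    simpa using main 1 h1
  intro z
  have hz : z ∈ LinearMap.range β := by
    induction z using TensorProduct.induction_on with
    | zero => exact zero_mem _
    | tmul a x =>
      induction x using MonoidAlgebra.induction with
      | zero =>
        simpa using zero_mem (LinearMap.range β)
      | single_add g c f hg hc ih =>
        rw [TensorProduct.tmul_add]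
        refine Submodule.add_mem _ ?_ ih
        have hs : (MonoidAlgebra.single g c : MonoidAlgebra K G) =
            c • MonoidAlgebra.single g (1 : K) := by
          simp [MonoidAlgebra.smul_single']
        rw [hs, TensorProduct.tmul_smul]
        exact Submodule.smul_mem _ _ (key a g)
    | add x y hx hy => exact Submodule.add_mem _ hx hy
  exact hz
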